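/- Let K ≥ 2 and δ ∈ (0, 1/(4K)). Consider the instance I_1 with N = K items having rewards r_1 = … = r_{K−1} = 1, r_K = (1−δ)/(2−δ), and preferences v_1 = … = v_{K−1} = 1/(K−1), v_K = 1. Then the optimal expected reward over assortments of size at most K is θ_v = 1/2, attained (uniquely among subsets not containing item K, and by no subset containing item K) by the assortment S_v = {1, …, K−1}; in particular R({1, …, K−1}, v) = 1/2 and R(S, v) < 1/2 for every S ⊆ [K] with K ∈ S. -/

import Mathlib

/-- The expected reward `R(S, v)` of an assortment `S`. -/
noncomputable def Rew {N : ℕ} (r v : Fin N → ℝ) (S : Finset (Fin N)) : ℝ :=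
  (∑ i ∈ S, r i * v i) / (1 + ∑ i ∈ S, v i)

/-- `θ_v`: the optimal expected reward over assortments of size at most `K`. -/
noncomputable def thetaOpt (N K : ℕ) (r v : Fin N → ℝ) : ℝ :=
  ((Finset.univ : Finset (Fin N)).powerset.filter (fun S => S.card ≤ K)).sup'
    ⟨∅, by simp⟩ (Rew r v)

/- `Top([N], w, θ)`: take the `min {K, N}` items `i` with the largest values
`(r i − θ) * w i` (ties broken in favor of smaller index), then remove all items
with `r i − θ ≤ 0`. -/
open Classical in
noncomputable def TopSet (N K : ℕ) (r w : Fin N → ℝ) (θ : ℝ) : Finset (Fin N) :=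
  ((List.insertionSort (fun i j =>
      (r j - θ) * w j < (r i - θ) * w i ∨
      ((r i - θ) * w i = (r j - θ) * w j ∧ i ≤ j)) (List.finRange N)).take
    (min K N)).toFinset.filter (fun i => θ < r i)
/-- For instance `I₁` (rewards `r_1 = … = r_{K−1} = 1`, `r_K = (1−δ)/(2−δ)`;
preferences `v_1 = … = v_{K−1} = 1/(K−1)`, `v_K = 1`), the optimal expected
reward is `θ_v = 1/2`, attained by `S_v = {1, …, K−1}`; this is the unique
maximizer among subsets not containing item `K`, and every subset containing
item `K` has expected reward `< 1/2`. -/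
theorem stmt13 (K : ℕ) (hK : 2 ≤ K) (δ : ℝ) (hδ : 0 < δ ∧ δ < 1 / (4 * K))
    (r v : Fin K → ℝ)
    (hr : ∀ i, r i = if (i : ℕ) < K - 1 then 1 else (1 - δ) / (2 - δ))
    (hv : ∀ i, v i = if (i : ℕ) < K - 1 then 1 / ((K : ℝ) - 1) else 1) :
    thetaOpt K K r v = 1 / 2 ∧
      Rew r v (Finset.univ.filter (fun i : Fin K => (i : ℕ) < K - 1)) = 1 / 2 ∧
      (∀ S : Finset (Fin K), (⟨K - 1, by omega⟩ : Fin K) ∉ S →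
        Rew r v S = 1 / 2 → S = Finset.univ.filter (fun i : Fin K => (i : ℕ) < K - 1)) ∧
      (∀ S : Finset (Fin K), (⟨K - 1, by omega⟩ : Fin K) ∈ S →
        Rew r v S < 1 / 2) := by
  obtain ⟨hδ0, hδ1⟩ := hδ
  have hKR : (2 : ℝ) ≤ (K : ℝ) := by exact_mod_cast hK
  have hK1 : (0 : ℝ) < (K : ℝ) - 1 := by linarith
  have hK1' : ((K : ℝ) - 1) ≠ 0 := ne_of_gt hK1
  set last : Fin K := ⟨K - 1, by omega⟩ with hlast
  have hδsmall : δ < 1 := by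
    have h4K : (0 : ℝ) < 4 * K := by positivity
    have : 1 / (4 * (K : ℝ)) ≤ 1 := by
      rw [div_le_one h4K]; linarith
    linarith
  have hc2 : (0 : ℝ) < 2 - δ := by linarith
  set c : ℝ := (1 - δ) / (2 - δ) with hcdef
  have hc : c < 1 / 2 := by
    rw [hcdef, div_lt_div_iff₀ hc2 two_pos]; linarith
  have hc0 : 0 ≤ c := div_nonneg (by linarith) (le_of_lt hc2)
  -- membership characterization
  have hne : ∀ i : Fin K, i ≠ last ↔ (i : ℕ) < K - 1 := by
    intro i
    have hi := i.isLt
    rw [Ne, Fin.ext_iff]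
    simp only [hlast]
    omega
  have hvlast : v last = 1 := by
    rw [hv]; simp only [hlast]; rw [if_neg (by omega)]
  have hrlast : r last = c := by
    rw [hr]; simp only [hlast]; rw [if_neg (by omega)]
  -- the candidate set
  set Sv : Finset (Fin K) := Finset.univ.filter (fun i : Fin K => (i : ℕ) < K - 1) with hSv
  have hSvErase : Sv = Finset.univ.erase last := by
    ext i
    simp only [hSv, Finset.mem_filter, Finset.mem_erase, Finset.mem_univ, true_and, and_true]
    exact (hne i).symm
  have hSvCard : (Sv.card : ℝ) = (K : ℝ) - 1 := by
    rw [hSvErase, Finset.card_erase_of_mem (Finset.mem_univ _), Finset.card_univ,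
      Fintype.card_fin]
    have : (1 : ℕ) ≤ K := by omega
    push_cast [Nat.cast_sub this]
    ring
  have hlastSv : last ∉ Sv := by
    rw [hSvErase]; exact Finset.notMem_erase _ _
  -- key computation of Rew for any S
  have key : ∀ S : Finset (Fin K),
      Rew r v S = ((((S.erase last).card : ℝ) / ((K : ℝ) - 1) + (if last ∈ S then c else 0)) /
        (1 + ((S.erase last).card : ℝ) / ((K : ℝ) - 1) + (if last ∈ S then 1 else 0))) := by
    intro S
    have hev : ∑ i ∈ S.erase last, v i = ((S.erase last).card : ℝ) / ((K : ℝ) - 1) := by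
      have h1 : ∀ i ∈ S.erase last, v i = 1 / ((K : ℝ) - 1) := fun i hi => by
        rw [hv i, if_pos ((hne i).1 (Finset.ne_of_mem_erase hi))]
      rw [Finset.sum_congr rfl h1, Finset.sum_const, nsmul_eq_mul]
      ring
    have herv : ∑ i ∈ S.erase last, r i * v i
        = ((S.erase last).card : ℝ) / ((K : ℝ) - 1) := by
      have h1 : ∀ i ∈ S.erase last, r i * v i = 1 / ((K : ℝ) - 1) := fun i hi => by
        have hi' := (hne i).1 (Finset.ne_of_mem_erase hi)
        rw [hv i, hr i, if_pos hi', if_pos hi', one_mul]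
      rw [Finset.sum_congr rfl h1, Finset.sum_const, nsmul_eq_mul]
      ring
    by_cases hlS : last ∈ S
    · rw [Rew, ← Finset.sum_erase_add S v hlS, ← Finset.sum_erase_add S (fun i => r i * v i) hlS,
        hev, herv, hvlast, hrlast, if_pos hlS, if_pos hlS]
      ring_nf
    · rw [Rew, if_neg hlS, if_neg hlS, Finset.erase_eq_of_notMem hlS] at *
      rw [hev, herv]
      ring_nf
  -- bound on m
  have hm : ∀ S : Finset (Fin K), ((S.erase last).card : ℝ) ≤ (K : ℝ) - 1 := by
    intro S
    have hsub : S.erase last ⊆ Sv := by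
      rw [hSvErase]
      exact Finset.erase_subset_erase _ (Finset.subset_univ S)
    have := Finset.card_le_card hsub
    calc ((S.erase last).card : ℝ) ≤ (Sv.card : ℝ) := by exact_mod_cast this
      _ = (K : ℝ) - 1 := hSvCard
  have hm0 : ∀ S : Finset (Fin K), (0 : ℝ) ≤ ((S.erase last).card : ℝ) := by
    intro S; exact Nat.cast_nonneg _
  -- Rew of Sv
  have hRewSv : Rew r v Sv = 1 / 2 := by
    rw [key Sv, if_neg hlastSv, if_neg hlastSv, Finset.erase_eq_of_notMem hlastSv, hSvCard,
      div_self hK1']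
    norm_num
  -- strict bound when last ∈ S
  have hstrict : ∀ S : Finset (Fin K), last ∈ S → Rew r v S < 1 / 2 := by
    intro S hlS
    rw [key S, if_pos hlS, if_pos hlS]
    set x : ℝ := ((S.erase last).card : ℝ) / ((K : ℝ) - 1) with hx
    have hx0 : 0 ≤ x := by rw [hx]; exact div_nonneg (Nat.cast_nonneg _) hK1.le
    have hx1 : x ≤ 1 := by
      rw [hx, div_le_one hK1]; exact hm S
    rw [div_lt_div_iff₀ (by linarith) two_pos]
    linarith
  -- weak bound always
  have hle : ∀ S : Finset (Fin K), Rew r v S ≤ 1 / 2 := by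
    intro S
    by_cases hlS : last ∈ S
    · exact le_of_lt (hstrict S hlS)
    · rw [key S, if_neg hlS, if_neg hlS]
      set x : ℝ := ((S.erase last).card : ℝ) / ((K : ℝ) - 1) with hx
      have hx0 : 0 ≤ x := by rw [hx]; exact div_nonneg (Nat.cast_nonneg _) hK1.le
      have hx1 : x ≤ 1 := by
        rw [hx, div_le_one hK1]; exact hm S
      rw [div_le_div_iff₀ (by linarith) two_pos]
      linarith
  refine ⟨?_, hRewSv, ?_, hstrict⟩
  · -- thetaOpt
    rw [thetaOpt]
    apply le_antisymm
    · apply Finset.sup'_le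
      intro S _
      exact hle S
    · rw [← hRewSv]
      apply Finset.le_sup'
      rw [Finset.mem_filter, Finset.mem_powerset]
      refine ⟨Finset.subset_univ _, ?_⟩
      calc Sv.card ≤ (Finset.univ : Finset (Fin K)).card := Finset.card_le_univ _
        _ = K := by rw [Finset.card_univ, Fintype.card_fin]
  · -- uniqueness
    intro S hlS hRS
    rw [key S, if_neg hlS, if_neg hlS, Finset.erase_eq_of_notMem hlS, add_zero, add_zero] at hRS
    set x : ℝ := ((S.card : ℕ) : ℝ) / ((K : ℝ) - 1) with hx
    have hx0 : (0 : ℝ) ≤ x := div_nonneg (Nat.cast_nonneg _) (le_of_lt hK1)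
    have h1x : (0 : ℝ) < 1 + x := by linarith
    rw [div_eq_div_iff h1x.ne' two_ne_zero] at hRS
    have hx1 : x = 1 := by linarith
    rw [hx, div_eq_one_iff_eq hK1'] at hx1
    have hcardN : Sv.card ≤ S.card := by
      have h2 : (Sv.card : ℝ) = (S.card : ℝ) := by rw [hSvCard, hx1]
      have h3 : Sv.card = S.card := Nat.cast_injective h2
      omega
    have hsub : S ⊆ Sv := by
      intro i hi
      rw [hSv, Finset.mem_filter]
      refine ⟨Finset.mem_univ _, (hne i).1 ?_⟩
      intro h; exact hlS (h ▸ hi)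
    exact Finset.eq_of_subset_of_card_le hsub hcardN
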